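/- Let V be an ℕ-graded vertex algebra. The functor S from A(V)-modules to ℕ-gradable weak V-modules satisfies the following universal property: for any A(V)-module M, any ℕ-gradable weak V-module W, and any A(V)-module map f : M → T(W), there exists a unique V-module map f̃ : S(M) → W such that the restriction of f̃ to the top level T(S(M)) equals f ∘ e_M^{−1}. -/

import Mathlib

open scoped BigOperators

/-- Generalized binomial coefficient `C(a, i)` for `a : ℤ`, `i : ℕ`, valued in `ℂ`. -/
noncomputable def gb (a : ℤ) (i : ℕ) : ℂ :=
  (∏ j ∈ Finset.range i, ((a : ℂ) - (j : ℂ))) / (Nat.factorial i : ℂ)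

/-- A vertex algebra, presented through the coefficient operators
`coeff u n = u_n = Res_x x^n Y(u,x)` of its vertex operator map, together with the
vacuum, truncation, creation and Borcherds (Jacobi) identity axioms. -/
structure VertexAlgebra (V : Type*) [AddCommGroup V] [Module ℂ V] where
  coeff : V → ℤ → V →ₗ[ℂ] V
  coeff_add : ∀ (u v : V) (n : ℤ), coeff (u + v) n = coeff u n + coeff v n
  coeff_smul : ∀ (c : ℂ) (u : V) (n : ℤ), coeff (c • u) n = c • coeff u n
  vac : V
  vac_coeff_neg_one : ∀ v : V, coeff vac (-1) v = v
  vac_coeff : ∀ n : ℤ, n ≠ -1 → coeff vac n = 0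
  trunc : ∀ u v : V, ∃ N : ℤ, ∀ n ≥ N, coeff u n v = 0
  creation : ∀ (u : V) (n : ℤ), 0 ≤ n → coeff u n vac = 0
  create_neg_one : ∀ u : V, coeff u (-1) vac = u
  borcherds : ∀ (u v w : V) (p q r : ℤ),
    (∑ᶠ i : ℕ, gb p i • coeff (coeff u (r + i) v) (p + q - i) w) =
    ∑ᶠ i : ℕ, ((-1 : ℂ) ^ i * gb r i) •
      (coeff u (p + r - i) (coeff v (q + i) w)
        - ((-1 : ℂ) ^ r) • coeff v (q + r - i) (coeff u (p + i) w))

/-- A module for a vertex algebra, presented through the coefficient operators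
`Yw u n = u_n = Res_x x^n Y_W(u,x)`, with weak associativity (in coefficient form:
for every `a b : ℤ`, the coefficient of `x₀^a x₂^b` in
`(x₀+x₂)^l Y_W(u,x₀+x₂) Y_W(v,x₂) w` equals that in `(x₀+x₂)^l Y_W(Y(u,x₀)v,x₂) w`,
where `(x₀+x₂)^n` is expanded in nonnegative powers of `x₂`) as the main axiom. -/
structure VAModule {V : Type*} [AddCommGroup V] [Module ℂ V] (A : VertexAlgebra V)
    (W : Type*) [AddCommGroup W] [Module ℂ W] where
  Yw : V → ℤ → W →ₗ[ℂ] W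
  Yw_add : ∀ (u v : V) (n : ℤ), Yw (u + v) n = Yw u n + Yw v n
  Yw_smul : ∀ (c : ℂ) (u : V) (n : ℤ), Yw (c • u) n = c • Yw u n
  vac_neg_one : ∀ w : W, Yw A.vac (-1) w = w
  vac_ne : ∀ n : ℤ, n ≠ -1 → Yw A.vac n = 0
  trunc : ∀ (u : V) (w : W), ∃ N : ℤ, ∀ n ≥ N, Yw u n w = 0
  weak_assoc : ∀ (u v : V) (w : W) (l : ℕ),
    (∀ n : ℤ, (l : ℤ) ≤ n → Yw u n w = 0) →
    ∀ a b : ℤ,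
      (∑ᶠ j : ℕ, gb (a + j) j • Yw u ((l : ℤ) - 1 - a - j) (Yw v ((j : ℤ) - b - 1) w)) =
      ∑ j ∈ Finset.range (l + 1),
        gb l j • Yw (A.coeff u ((l : ℤ) - j - a - 1) v) ((j : ℤ) - b - 1) w

/-- A ℤ-graded vertex algebra: a vertex algebra with an internal direct sum
decomposition `V = ⨁_{n∈ℤ} V_(n)` compatible with the vertex operator coefficients:
`u_n` maps `V_(k)` to `V_(k + m - n - 1)` for `u ∈ V_(m)`. -/
structure GradedVA (V : Type*) [AddCommGroup V] [Module ℂ V] extends VertexAlgebra V where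
  gr : ℤ → Submodule ℂ V
  internal : DirectSum.IsInternal gr
  vac_mem : vac ∈ gr 0
  coeff_grade : ∀ {m : ℤ} {u : V}, u ∈ gr m → ∀ (n : ℤ) {k : ℤ} {v : V}, v ∈ gr k →
    coeff u n v ∈ gr (k + m - n - 1)

/-- An ℕ-graded vertex algebra: `V_(n) = 0` for `n < 0`. -/
def GradedVA.IsNNGraded {V : Type*} [AddCommGroup V] [Module ℂ V] (A : GradedVA V) : Prop :=
  ∀ n : ℤ, n < 0 → A.gr n = ⊥

/-- The property that a family of coefficient operators `Yw u n = u_n` defines a weak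
module structure over the vertex algebra `A` on `W`: linearity in `u`, lower
truncation, the vacuum property `Y_W(1,x) = id`, and the Borcherds (Jacobi) identity. -/
def IsWeakModule {V W : Type*} [AddCommGroup V] [Module ℂ V] [AddCommGroup W] [Module ℂ W]
    (A : VertexAlgebra V) (Yw : V → ℤ → W →ₗ[ℂ] W) : Prop :=
  (∀ (u v : V) (n : ℤ), Yw (u + v) n = Yw u n + Yw v n) ∧
  (∀ (c : ℂ) (u : V) (n : ℤ), Yw (c • u) n = c • Yw u n) ∧
  (∀ (u : V) (w : W), ∃ N : ℤ, ∀ n ≥ N, Yw u n w = 0) ∧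
  (∀ w : W, Yw A.vac (-1) w = w) ∧
  (∀ n : ℤ, n ≠ -1 → Yw A.vac n = 0) ∧
  (∀ (u v : V) (w : W) (p q r : ℤ),
    (∑ᶠ i : ℕ, gb p i • Yw (A.coeff u (r + i) v) (p + q - i) w) =
    ∑ᶠ i : ℕ, ((-1 : ℂ) ^ i * gb r i) •
      (Yw u (p + r - i) (Yw v (q + i) w)
        - ((-1 : ℂ) ^ r) • Yw v (q + r - i) (Yw u (p + i) w)))

/-- An ℕ-grading on a weak module: an internal direct sum `W = ⨁ W_(n)` with
`W_(n) = 0` for `n < 0` and `u_n : W_(k) → W_(k + m - n - 1)` for `u ∈ V_(m)`. -/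
def IsNNGradedModule {V W : Type*} [AddCommGroup V] [Module ℂ V] [AddCommGroup W]
    [Module ℂ W] (A : GradedVA V) (Yw : V → ℤ → W →ₗ[ℂ] W)
    (wgr : ℤ → Submodule ℂ W) : Prop :=
  DirectSum.IsInternal wgr ∧ (∀ n : ℤ, n < 0 → wgr n = ⊥) ∧
  (∀ {m : ℤ} {u : V}, u ∈ A.gr m → ∀ (n : ℤ) {k : ℤ} {w : W}, w ∈ wgr k →
    Yw u n w ∈ wgr (k + m - n - 1))

/-- The top level `T(W)` of a module: the subspace of `w ∈ W` with `u_n w = 0`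
whenever `wt u - n - 1 < 0` for homogeneous `u`. -/
def topLevel {V W : Type*} [AddCommGroup V] [Module ℂ V] [AddCommGroup W] [Module ℂ W]
    (A : GradedVA V) (Yw : V → ℤ → W →ₗ[ℂ] W) : Submodule ℂ W where
  carrier := {w | ∀ (m : ℤ) (u : V), u ∈ A.gr m → ∀ n : ℤ, m - n - 1 < 0 → Yw u n w = 0}
  zero_mem' := by intro m u hu n hn; simp
  add_mem' := by
    intro a b ha hb m u hu n hn
    rw [map_add, ha m u hu n hn, hb m u hu n hn, add_zero]
  smul_mem' := by intro c a ha m u hu n hn; rw [map_smul, ha m u hu n hn, smul_zero]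

/-- A module for the Zhu algebra `A(V)` of an ℕ-graded vertex algebra `V`, encoded as
an action `ρ` of `V` on `M` which kills the spanning elements of `O(V)` and satisfies
`ρ(u * v) = ρ(u) ρ(v)` for the Zhu product `*`, with the vacuum acting as identity. -/
structure AVModule {V : Type*} [AddCommGroup V] [Module ℂ V] (A : GradedVA V)
    (M : Type*) [AddCommGroup M] [Module ℂ M] where
  ρ : V → M →ₗ[ℂ] M
  ρ_add : ∀ (u v : V), ρ (u + v) = ρ u + ρ v
  ρ_smul : ∀ (c : ℂ) (u : V), ρ (c • u) = c • ρ u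
  ρ_vac : ∀ w : M, ρ A.vac w = w
  ρ_O : ∀ (wu wv : ℕ) (u v : V), u ∈ A.gr (wu : ℤ) → v ∈ A.gr (wv : ℤ) →
    ∀ n : ℤ, n ≤ -2 →
      ρ (∑ j ∈ Finset.range (wu + 1), gb (wu : ℤ) j • A.coeff u (n + j) v) = 0
  ρ_mul : ∀ (wu : ℕ) (u : V), u ∈ A.gr (wu : ℤ) → ∀ (v : V) (w : M),
    ρ (∑ j ∈ Finset.range (wu + 1), gb (wu : ℤ) j • A.coeff u ((j : ℤ) - 1) v) w =
      ρ u (ρ v w)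

open TensorProduct

/-- The tensor algebra `T(V[t,t⁻¹])` on the affinization `V[t,t⁻¹] = V ⊗ ℂ[t,t⁻¹]`. -/
abbrev TVt (V : Type*) [AddCommGroup V] [Module ℂ V] :=
  TensorAlgebra ℂ (V ⊗[ℂ] AddMonoidAlgebra ℂ ℤ)

/-- The space `T(V[t,t⁻¹]) ⊗ M`. -/
abbrev TAM (V : Type*) [AddCommGroup V] [Module ℂ V]
    (M : Type*) [AddCommGroup M] [Module ℂ M] := TVt V ⊗[ℂ] M

/-- Left multiplication by `u(m) = u ⊗ t^m` on `T(V[t,t⁻¹]) ⊗ M`. -/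
noncomputable def act {V : Type*} [AddCommGroup V] [Module ℂ V]
    (M : Type*) [AddCommGroup M] [Module ℂ M] (u : V) (m : ℤ) :
    TAM V M →ₗ[ℂ] TAM V M :=
  LinearMap.rTensor M (LinearMap.mulLeft ℂ
    (TensorAlgebra.ι ℂ (u ⊗ₜ (AddMonoidAlgebra.ofCoeff (Finsupp.single m (1 : ℂ)) : AddMonoidAlgebra ℂ ℤ))))

/-- The embedding `M → T(V[t,t⁻¹]) ⊗ M`, `w ↦ 1 ⊗ w`. -/
noncomputable def ιM {V : Type*} [AddCommGroup V] [Module ℂ V]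
    (M : Type*) [AddCommGroup M] [Module ℂ M] : M →ₗ[ℂ] TAM V M :=
  TensorProduct.mk ℂ (TVt V) M 1

/-- Homogeneity of degree `d` in `T(V[t,t⁻¹]) ⊗ M`: elements of `M` have degree `0`,
and `u(m)` raises degree by `wt u - m - 1` for homogeneous `u`. -/
inductive Hdeg {V : Type*} [AddCommGroup V] [Module ℂ V] (A : GradedVA V)
    (M : Type*) [AddCommGroup M] [Module ℂ M] : ℤ → TAM V M → Prop
  | base (w : M) : Hdeg A M 0 (ιM M w)
  | step {d : ℤ} {x : TAM V M} (n m : ℤ) (u : V) (hu : u ∈ A.gr n)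
      (hx : Hdeg A M d x) : Hdeg A M (d + n - m - 1) (act M u m x)

/-- The smallest submodule containing `s` and stable under all operators `F u m`;
this is the `T(V[t,t⁻¹])`-submodule generated by `s` when `F = act`. -/
def endoClosure {V W : Type*} [AddCommGroup V] [Module ℂ V] [AddCommGroup W] [Module ℂ W]
    (F : V → ℤ → W →ₗ[ℂ] W) (s : Set W) : Submodule ℂ W :=
  sInf {N | s ⊆ (N : Set W) ∧ ∀ (u : V) (m : ℤ), ∀ x ∈ N, F u m x ∈ N}

lemma endoClosure_stable {V W : Type*} [AddCommGroup V] [Module ℂ V] [AddCommGroup W]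
    [Module ℂ W] (F : V → ℤ → W →ₗ[ℂ] W) (s : Set W) (u : V) (m : ℤ) {x : W}
    (hx : x ∈ endoClosure F s) : F u m x ∈ endoClosure F s := by
  simp only [endoClosure, Submodule.mem_sInf] at hx ⊢
  exact fun N hN => hN.2 u m x (hx N hN)

lemma subset_endoClosure {V W : Type*} [AddCommGroup V] [Module ℂ V] [AddCommGroup W]
    [Module ℂ W] (F : V → ℤ → W →ₗ[ℂ] W) (s : Set W) : s ⊆ (endoClosure F s : Set W) := by
  intro x hx
  simp only [endoClosure, SetLike.mem_coe, Submodule.mem_sInf]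
  exact fun N hN => hN.1 hx

/-- The generators of the submodule `ℐ`: (a) lower-truncation elements, (b) the
relation identifying the action of zero modes on `M` with the `A(V)`-action, and
(c) the iterate-formula relations. -/
def genI {V : Type*} [AddCommGroup V] [Module ℂ V] (A : GradedVA V)
    (M : Type*) [AddCommGroup M] [Module ℂ M] (ρ : AVModule A M) : Set (TAM V M) :=
  {y | ∃ (n m d : ℤ) (u : V) (x : TAM V M), u ∈ A.gr n ∧ Hdeg A M d x ∧
      n - m - 1 + d < 0 ∧ y = act M u m x} ∪
  {y | ∃ (n : ℤ) (u : V) (w : M), u ∈ A.gr n ∧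
      y = act M u (n - 1) (ιM M w) - ιM M (ρ.ρ u w)} ∪
  {y | ∃ (nu nv d p q : ℤ) (u v : V) (x : TAM V M), u ∈ A.gr nu ∧ v ∈ A.gr nv ∧
      Hdeg A M d x ∧ q < nv + d ∧ 0 ≤ nu - p - 1 + nv - q - 1 + d ∧
      y = act M u p (act M v q x) -
        ∑ i ∈ Finset.range (nv + d - q).toNat, ∑ j ∈ Finset.range ((nu + d).toNat + 1),
          (gb (p - nu - d) i * gb (nu + d) j) •
            act M (A.coeff u (p - nu - d - i + j) v) (q + nu + d + i - j) x}

/-- The submodule `ℐ ⊆ T(V[t,t⁻¹]) ⊗ M`. -/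
noncomputable def idealI {V : Type*} [AddCommGroup V] [Module ℂ V] (A : GradedVA V)
    (M : Type*) [AddCommGroup M] [Module ℂ M] (ρ : AVModule A M) :
    Submodule ℂ (TAM V M) :=
  endoClosure (act M) (genI A M ρ)

/-- `S₁(M) = (T(V[t,t⁻¹]) ⊗ M)/ℐ`. -/
abbrev S1 {V : Type*} [AddCommGroup V] [Module ℂ V] (A : GradedVA V)
    (M : Type*) [AddCommGroup M] [Module ℂ M] (ρ : AVModule A M) :=
  TAM V M ⧸ idealI A M ρ

/-- The induced action of `u(m)` on `S₁(M)`. -/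
noncomputable def act1 {V : Type*} [AddCommGroup V] [Module ℂ V] (A : GradedVA V)
    (M : Type*) [AddCommGroup M] [Module ℂ M] (ρ : AVModule A M) (u : V) (m : ℤ) :
    S1 A M ρ →ₗ[ℂ] S1 A M ρ :=
  Submodule.mapQ _ _ (act M u m)
    (fun _ hx => endoClosure_stable (act M) (genI A M ρ) u m hx)

/-- The generators of `𝒥 ⊆ S₁(M)`: the residue-vanishing elements
`Res_{x₀}Res_{x₂} x₀^m x₂^{K+wt v-m-deg w-2} (x₀+x₂)^{wt u+deg w}
Y(Y(u,x₀)v,x₂)w` (in component form) for homogeneous `u, v`, homogeneous `w` of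
degree `d`, and `m ≤ K - 2d - 2`. -/
def genJ {V : Type*} [AddCommGroup V] [Module ℂ V] (A : GradedVA V)
    (M : Type*) [AddCommGroup M] [Module ℂ M] (ρ : AVModule A M) : Set (S1 A M ρ) :=
  {y | ∃ (wu wv : ℕ) (d K m : ℤ) (u v : V) (x : TAM V M),
      u ∈ A.gr (wu : ℤ) ∧ v ∈ A.gr (wv : ℤ) ∧ Hdeg A M d x ∧ m ≤ K - 2 * d - 2 ∧
      y = (idealI A M ρ).mkQ
        (∑ j ∈ Finset.range (((wu : ℤ) + d).toNat + 1),
          gb ((wu : ℤ) + d) j •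
            act M (A.coeff u ((j : ℤ) + m) v) (K + (wu : ℤ) + (wv : ℤ) - j - m - 2) x)}

/-- The submodule `𝒥 ⊆ S₁(M)`. -/
noncomputable def idealJ {V : Type*} [AddCommGroup V] [Module ℂ V] (A : GradedVA V)
    (M : Type*) [AddCommGroup M] [Module ℂ M] (ρ : AVModule A M) :
    Submodule ℂ (S1 A M ρ) :=
  endoClosure (act1 A M ρ) (genJ A M ρ)

/-- `S(M) = S₁(M)/𝒥`. -/
abbrev SM {V : Type*} [AddCommGroup V] [Module ℂ V] (A : GradedVA V)
    (M : Type*) [AddCommGroup M] [Module ℂ M] (ρ : AVModule A M) :=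
  S1 A M ρ ⧸ idealJ A M ρ

/-- The coefficient operators `Y_{S(M)}(u, x)` on `S(M)`, induced by `Y_t`. -/
noncomputable def act2 {V : Type*} [AddCommGroup V] [Module ℂ V] (A : GradedVA V)
    (M : Type*) [AddCommGroup M] [Module ℂ M] (ρ : AVModule A M) (u : V) (m : ℤ) :
    SM A M ρ →ₗ[ℂ] SM A M ρ :=
  Submodule.mapQ _ _ (act1 A M ρ u m)
    (fun _ hx => endoClosure_stable (act1 A M ρ) (genJ A M ρ) u m hx)

/-- The canonical map `e_M : M → S(M)` induced by `w ↦ 1 ⊗ w`. -/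
noncomputable def eM {V : Type*} [AddCommGroup V] [Module ℂ V] (A : GradedVA V)
    (M : Type*) [AddCommGroup M] [Module ℂ M] (ρ : AVModule A M) : M →ₗ[ℂ] SM A M ρ :=
  (idealJ A M ρ).mkQ.comp ((idealI A M ρ).mkQ.comp (ιM M))

/-! ### Auxiliary lemmas for the proof of `statement12` -/

lemma gb_zero_right' (a : ℤ) : gb a 0 = 1 := by simp [gb]

lemma gb_zero_left' {i : ℕ} (h : i ≠ 0) : gb 0 i = 0 := by
  unfold gb
  rw [Finset.prod_eq_zero (Finset.mem_range.2 (Nat.pos_of_ne_zero h)) (by simp), zero_div]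

lemma gb_nat_lt' {l i : ℕ} (h : l < i) : gb (l : ℤ) i = 0 := by
  unfold gb
  rw [Finset.prod_eq_zero (Finset.mem_range.2 h) (by push_cast; ring), zero_div]

lemma gb_mul' (a : ℤ) {s i : ℕ} (h : i ≤ s) :
    gb a i * gb (a - i) (s - i) = gb a s * (s.choose i : ℂ) := by
  have key : (∏ j ∈ Finset.range i, ((a:ℂ) - (j:ℂ))) *
      (∏ j ∈ Finset.range (s-i), (((a - (i:ℤ) : ℤ) : ℂ) - (j:ℂ)))
      = ∏ j ∈ Finset.range s, ((a:ℂ) - (j:ℂ)) := by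
    conv_rhs => rw [show s = i + (s - i) by omega]
    rw [Finset.prod_range_add]
    congr 1
    refine Finset.prod_congr rfl fun j _ => ?_
    push_cast; ring
  have hcf : ((s.choose i : ℕ) : ℂ) * (i.factorial : ℂ) * ((s-i).factorial : ℂ)
      = (s.factorial : ℂ) := by
    exact_mod_cast congrArg (Nat.cast : ℕ → ℂ) (Nat.choose_mul_factorial_mul_factorial h)
  have h1 : (i.factorial : ℂ) ≠ 0 := Nat.cast_ne_zero.2 i.factorial_ne_zero
  have h2 : ((s-i).factorial : ℂ) ≠ 0 := Nat.cast_ne_zero.2 (s-i).factorial_ne_zero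
  have h3 : (s.factorial : ℂ) ≠ 0 := Nat.cast_ne_zero.2 s.factorial_ne_zero
  unfold gb
  rw [div_mul_div_comm, key]
  field_simp
  linear_combination (-(∏ j ∈ Finset.range s, ((a:ℂ) - (j:ℂ)))) * hcf

lemma alt_sum_choose' (s : ℕ) :
    ∑ i ∈ Finset.range (s+1), (-1 : ℂ)^(s-i) * (s.choose i : ℂ)
      = if s = 0 then 1 else 0 := by
  have h0 := Int.alternating_sum_range_choose (n := s)
  have h1 : ∑ i ∈ Finset.range (s+1), (-1 : ℂ)^i * (s.choose i : ℂ)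
      = if s = 0 then 1 else 0 := by
    have := congrArg (Int.cast : ℤ → ℂ) h0
    push_cast at this
    convert this using 2
  rw [← h1, ← Finset.sum_range_reflect]
  refine Finset.sum_congr rfl fun j hj => ?_
  have hj' : j ≤ s := by simpa [Nat.lt_succ_iff] using Finset.mem_range.1 hj
  rw [show s + 1 - 1 - j = s - j from by omega, show s - (s - j) = j from by omega,
    Nat.choose_symm hj']

lemma coeff_delta' (a : ℤ) (s : ℕ) :
    ∑ z ∈ Finset.HasAntidiagonal.antidiagonal s, gb a z.1 * ((-1:ℂ)^z.2 * gb (a - z.1) z.2)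
      = if s = 0 then 1 else 0 := by
  rw [Finset.Nat.sum_antidiagonal_eq_sum_range_succ_mk]
  have hc : ∀ k ∈ Finset.range (s+1),
      gb a k * ((-1:ℂ)^(s-k) * gb (a - k) (s - k))
        = ((-1:ℂ)^(s-k) * (s.choose k : ℂ)) * gb a s := by
    intro k hk
    have hk' : k ≤ s := by simpa [Nat.lt_succ_iff] using Finset.mem_range.1 hk
    calc gb a k * ((-1:ℂ)^(s-k) * gb (a - k) (s - k))
        = (-1:ℂ)^(s-k) * (gb a k * gb (a - k) (s - k)) := by ring
      _ = (-1:ℂ)^(s-k) * (gb a s * (s.choose k : ℂ)) := by rw [gb_mul' a hk']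
      _ = ((-1:ℂ)^(s-k) * (s.choose k : ℂ)) * gb a s := by ring
  rw [Finset.sum_congr rfl hc, ← Finset.sum_mul, alt_sum_choose']
  split
  · simp [gb_zero_right', *]
  · simp

lemma vander' {W : Type*} [AddCommGroup W] [Module ℂ W] (a : ℤ) (K : ℕ) (hK : 0 < K)
    (G : ℕ → W) (hG : ∀ s, K ≤ s → G s = 0) :
    ∑ i ∈ Finset.range K, ∑ k ∈ Finset.range K,
      (gb a i * ((-1:ℂ)^k * gb (a - i) k)) • G (i+k) = G 0 := by
  rw [← Finset.sum_product']
  set P := Finset.range K ×ˢ Finset.range K with hP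
  set F : ℕ × ℕ → W := fun z => (gb a z.1 * ((-1:ℂ)^z.2 * gb (a - z.1) z.2)) • G (z.1+z.2)
    with hF
  have h1 : ∑ z ∈ P, F z = ∑ z ∈ P.filter (fun z => z.1 + z.2 < K), F z := by
    refine (Finset.sum_subset (Finset.filter_subset _ _) ?_).symm
    intro z hzP hz
    have hge : K ≤ z.1 + z.2 := by
      rcases lt_or_ge (z.1+z.2) K with h|h
      · exact absurd (Finset.mem_filter.2 ⟨hzP, h⟩) hz
      · exact h
    simp [hF, hG _ hge]
  have h2 : P.filter (fun z => z.1 + z.2 < K)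
      = (Finset.range K).biUnion (fun s => Finset.HasAntidiagonal.antidiagonal s) := by
    ext z
    simp only [Finset.mem_filter, Finset.mem_biUnion, Finset.mem_range,
      Finset.mem_product, Finset.HasAntidiagonal.mem_antidiagonal, hP]
    exact ⟨fun h => ⟨z.1+z.2, h.2, rfl⟩, fun ⟨s,hs,he⟩ => by omega⟩
  have h3 : ∑ z ∈ (Finset.range K).biUnion (fun s => Finset.HasAntidiagonal.antidiagonal s), F z
      = ∑ s ∈ Finset.range K, ∑ z ∈ Finset.HasAntidiagonal.antidiagonal s, F z := by
    refine Finset.sum_biUnion ?_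
    intro x _ y _ hxy
    simp only [Finset.disjoint_left, Finset.HasAntidiagonal.mem_antidiagonal]
    intro z h h'
    omega
  have h4 : ∀ s ∈ Finset.range K, ∑ z ∈ Finset.HasAntidiagonal.antidiagonal s, F z
      = (if s = 0 then (1:ℂ) else 0) • G s := by
    intro s _
    rw [← coeff_delta' a s, Finset.sum_smul]
    refine Finset.sum_congr rfl fun z hz => ?_
    rw [Finset.HasAntidiagonal.mem_antidiagonal] at hz
    rw [hF]; simp only [hz]
  rw [h1, h2, h3, Finset.sum_congr rfl h4]
  rw [Finset.sum_eq_single_of_mem 0 (Finset.mem_range.2 hK)]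
  · simp
  · intro b _ hb; simp [hb]

section ModuleAux

variable {V : Type*} [AddCommGroup V] [Module ℂ V] {W : Type*} [AddCommGroup W] [Module ℂ W]

/-- Apply a list of mode operators; each entry is `(grade, vector, mode)`. -/
def appL (Yw : V → ℤ → W →ₗ[ℂ] W) : List (ℤ × V × ℤ) → W →ₗ[ℂ] W
  | [] => LinearMap.id
  | e :: L => (Yw e.2.1 e.2.2).comp (appL Yw L)

/-- Degree shift of an entry. -/
def sh (e : ℤ × V × ℤ) : ℤ := e.1 - e.2.2 - 1

/-- Total degree shift of a list. -/
def shL (L : List (ℤ × V × ℤ)) : ℤ := (L.map sh).sum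

lemma appL_append (Yw : V → ℤ → W →ₗ[ℂ] W) (L1 L2 : List (ℤ × V × ℤ)) :
    appL Yw (L1 ++ L2) = (appL Yw L1).comp (appL Yw L2) := by
  induction L1 with
  | nil => simp [appL]
  | cons e L ih => simp [appL, ih, LinearMap.comp_assoc]

lemma shL_append (L1 L2 : List (ℤ × V × ℤ)) : shL (L1 ++ L2) = shL L1 + shL L2 := by
  simp [shL]

lemma shL_cons (e : ℤ × V × ℤ) (L : List (ℤ × V × ℤ)) : shL (e :: L) = sh e + shL L := by
  simp [shL]

lemma shL_nil : shL ([] : List (ℤ × V × ℤ)) = 0 := rfl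

lemma Yw_zero' (Yw : V → ℤ → W →ₗ[ℂ] W)
    (hsmul : ∀ (c : ℂ) (u : V) (n : ℤ), Yw (c • u) n = c • Yw u n) (n : ℤ) :
    Yw (0:V) n = 0 := by
  simpa using hsmul 0 0 n

lemma coeff_zero' {A : VertexAlgebra V} (n : ℤ) : A.coeff 0 n = 0 := by
  simpa using A.coeff_smul 0 0 n

variable (A : GradedVA V) (Yw : V → ℤ → W →ₗ[ℂ] W)

/-- The commutator formula, in finite-sum form. -/
lemma comm_formula (hW : IsWeakModule A.toVertexAlgebra Yw) (u v : V) (N : ℕ)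
    (hN : ∀ i : ℕ, N ≤ i → A.toVertexAlgebra.coeff u (i:ℤ) v = 0) (p q : ℤ) (y : W) :
    Yw u p (Yw v q y) = Yw v q (Yw u p y)
      + ∑ i ∈ Finset.range N, gb p i • Yw (A.toVertexAlgebra.coeff u (i:ℤ) v) (p + q - i) y := by
  obtain ⟨hadd, hsmul, htr, hv1, hvn, hbor⟩ := hW
  have H := hbor u v y p q 0
  have hR : (∑ᶠ i : ℕ, ((-1 : ℂ) ^ i * gb 0 i) •
      (Yw u (p + 0 - i) (Yw v (q + i) y)
        - ((-1 : ℂ) ^ (0:ℤ)) • Yw v (q + 0 - i) (Yw u (p + i) y)))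
      = Yw u p (Yw v q y) - Yw v q (Yw u p y) := by
    rw [finsum_eq_single _ 0 (by
      intro i hi
      rw [gb_zero_left' hi, mul_zero, zero_smul])]
    norm_num [gb_zero_right']
  have hL : (∑ᶠ i : ℕ, gb p i • Yw (A.toVertexAlgebra.coeff u ((0:ℤ) + i) v) (p + q - i) y)
      = ∑ i ∈ Finset.range N, gb p i • Yw (A.toVertexAlgebra.coeff u (i:ℤ) v) (p + q - i) y := by
    rw [finsum_eq_sum_of_support_subset _ (s := Finset.range N) (by
      intro i hi
      simp only [Function.mem_support, Ne] at hi
      by_contra hmem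
      refine hi ?_
      have hNi : N ≤ i := by simpa using hmem
      rw [zero_add, hN i hNi, Yw_zero' Yw hsmul, LinearMap.zero_apply, smul_zero])]
    refine Finset.sum_congr rfl fun i _ => by rw [zero_add]
  rw [hR, hL] at H
  have H2 : Yw u p (Yw v q y) - Yw v q (Yw u p y)
      = ∑ i ∈ Finset.range N, gb p i • Yw (A.toVertexAlgebra.coeff u (i:ℤ) v) (p + q - i) y :=
    H.symm
  rw [sub_eq_iff_eq_add] at H2
  rw [H2, add_comm]

/-- The key truncation lemma: applying a list of homogeneous mode operators of negative
total degree shift to a top-level vector gives zero. -/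
lemma negkill (hW : IsWeakModule A.toVertexAlgebra Yw) :
    ∀ (k : ℕ) (L : List (ℤ × V × ℤ)), L.length = k →
    (∀ e ∈ L, e.2.1 ∈ A.gr e.1) → shL L < 0 →
    ∀ t ∈ topLevel A Yw, appL Yw L t = 0 := by
  intro k
  induction k using Nat.strong_induction_on with
  | _ k IH =>
  have push : ∀ (L2 : List (ℤ × V × ℤ)), (∀ e' ∈ L2, 0 ≤ sh e') →
      ∀ (L1 : List (ℤ × V × ℤ)) (e : ℤ × V × ℤ),
      (L1 ++ e :: L2).length = k →
      (∀ e' ∈ L1 ++ e :: L2, e'.2.1 ∈ A.gr e'.1) → sh e < 0 →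
      shL (L1 ++ e :: L2) < 0 →
      ∀ t ∈ topLevel A Yw, appL Yw (L1 ++ e :: L2) t = 0 := by
    intro L2
    induction L2 with
    | nil =>
      intro _ L1 e hlen hhom he _ t ht
      have h0 : Yw e.2.1 e.2.2 t = 0 :=
        ht e.1 e.2.1 (hhom e (by simp)) e.2.2 (by simpa [sh] using he)
      rw [appL_append]
      simp [appL, h0]
    | cons e2 L2' ih =>
      intro hnn L1 e hlen hhom he hsh t ht
      obtain ⟨n1, u1, m1⟩ := e
      obtain ⟨n2, u2, m2⟩ := e2
      obtain ⟨N0, hN0⟩ := A.toVertexAlgebra.trunc u1 u2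
      have hN : ∀ i : ℕ, N0.toNat ≤ i → A.toVertexAlgebra.coeff u1 (i:ℤ) u2 = 0 := by
        intro i hi
        apply hN0
        have h1 : ((N0.toNat : ℕ) : ℤ) ≤ (i : ℤ) := by exact_mod_cast hi
        have h2 := Int.self_le_toNat N0
        omega
      have hcomm := comm_formula A Yw ⟨hW.1, hW.2⟩ u1 u2 N0.toNat hN m1 m2 (appL Yw L2' t)
      have key : appL Yw (L1 ++ (n1,u1,m1) :: (n2,u2,m2) :: L2') t
          = appL Yw L1 (Yw u1 m1 (Yw u2 m2 (appL Yw L2' t))) := by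
        rw [appL_append]; simp [appL]
      rw [key, hcomm, map_add]
      have hlen' : L1.length + 2 + L2'.length = k := by
        simp [List.length_append] at hlen; omega
      have t1 : appL Yw L1 (Yw u2 m2 (Yw u1 m1 (appL Yw L2' t))) = 0 := by
        have e1 : appL Yw L1 (Yw u2 m2 (Yw u1 m1 (appL Yw L2' t)))
            = appL Yw ((L1 ++ [(n2,u2,m2)]) ++ (n1,u1,m1) :: L2') t := by
          rw [appL_append, appL_append]; simp [appL]
        rw [e1]
        refine ih (fun e' he' => hnn e' (by simp [he'])) (L1 ++ [(n2,u2,m2)]) (n1,u1,m1)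
          ?_ ?_ he ?_ t ht
        · simp [List.length_append] at hlen ⊢; omega
        · intro x hx
          apply hhom
          simp only [List.mem_append, List.mem_cons] at hx ⊢
          tauto
        · have : shL ((L1 ++ [(n2,u2,m2)]) ++ (n1,u1,m1) :: L2')
              = shL (L1 ++ (n1,u1,m1) :: (n2,u2,m2) :: L2') := by
            simp only [shL_append, shL_cons, shL_nil]
            ring
          rw [this]; exact hsh
      have t2 : appL Yw L1
          (∑ i ∈ Finset.range N0.toNat,
            gb m1 i • Yw (A.toVertexAlgebra.coeff u1 (i:ℤ) u2) (m1 + m2 - i) (appL Yw L2' t))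
          = 0 := by
        rw [map_sum]
        refine Finset.sum_eq_zero fun i _ => ?_
        rw [map_smul]
        have e2 : appL Yw L1 (Yw (A.toVertexAlgebra.coeff u1 (i:ℤ) u2) (m1 + m2 - i) (appL Yw L2' t))
            = appL Yw (L1 ++ (n2 + n1 - (i:ℤ) - 1, A.toVertexAlgebra.coeff u1 (i:ℤ) u2, m1 + m2 - i) :: L2') t := by
          rw [appL_append]; simp [appL]
        rw [e2, IH _ (show (L1 ++ (n2 + n1 - (i:ℤ) - 1, A.toVertexAlgebra.coeff u1 (i:ℤ) u2, m1 + m2 - i) :: L2').length < k by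
            simp [List.length_append]; omega) _ rfl ?_ ?_ t ht, smul_zero]
        · intro x hx
          simp only [List.mem_append, List.mem_cons] at hx
          rcases hx with hx | hx | hx
          · exact hhom x (by simp [hx])
          · subst hx
            exact A.coeff_grade (hhom (n1,u1,m1) (by simp)) (i:ℤ)
              (hhom (n2,u2,m2) (by simp))
          · exact hhom x (by simp [hx])
        · have : shL (L1 ++ (n2 + n1 - (i:ℤ) - 1, A.toVertexAlgebra.coeff u1 (i:ℤ) u2, m1 + m2 - i) :: L2')
              = shL (L1 ++ (n1,u1,m1) :: (n2,u2,m2) :: L2') := by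
            simp only [shL_append, shL_cons, sh]
            ring
          rw [this]; exact hsh
      rw [t1, t2, add_zero]
  intro L hlen hhom hsh t ht
  have decomp : (∀ e ∈ L, 0 ≤ sh e) ∨
      ∃ L1 e L2, L = L1 ++ e :: L2 ∧ sh e < 0 ∧ ∀ e' ∈ L2, 0 ≤ sh e' := by
    clear hlen hhom hsh
    induction L with
    | nil => left; simp
    | cons a L ihL =>
      rcases ihL with hall | ⟨L1, e, L2, rfl, he, hL2⟩
      · rcases lt_or_ge (sh a) 0 with h|h
        · exact Or.inr ⟨[], a, L, rfl, h, hall⟩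
        · left
          intro e he'
          rcases List.mem_cons.1 he' with rfl|h'
          · exact h
          · exact hall _ h'
      · exact Or.inr ⟨a :: L1, e, L2, rfl, he, hL2⟩
  rcases decomp with hall | ⟨L1, e, L2, rfl, he, hL2⟩
  · exfalso
    have : 0 ≤ shL L := by
      refine List.sum_nonneg ?_
      intro x hx
      obtain ⟨e, he, rfl⟩ := List.mem_map.1 hx
      exact hall e he
    omega
  · exact push L2 hL2 L1 e hlen hhom he hsh t ht

/-- `Reach A Yw d y`: `y` is obtained from a top-level vector by applying a list of
homogeneous mode operators of total degree shift `d`. -/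
def Reach (d : ℤ) (y : W) : Prop :=
  ∃ L t, (∀ e ∈ L, e.2.1 ∈ A.gr e.1) ∧ shL L = d ∧ t ∈ topLevel A Yw ∧ y = appL Yw L t

variable {A Yw}

lemma Reach.base {t : W} (ht : t ∈ topLevel A Yw) : Reach A Yw 0 t :=
  ⟨[], t, by simp, by simp [shL], ht, rfl⟩

lemma Reach.step {d : ℤ} {y : W} (hy : Reach A Yw d y) {n : ℤ} {u : V} (hu : u ∈ A.gr n)
    (m : ℤ) : Reach A Yw (d + n - m - 1) (Yw u m y) := by
  obtain ⟨L, t, hhom, hsh, ht, rfl⟩ := hy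
  refine ⟨(n, u, m) :: L, t, ?_, ?_, ht, rfl⟩
  · intro e he
    rcases List.mem_cons.1 he with rfl|h'
    · exact hu
    · exact hhom _ h'
  · rw [shL_cons, hsh]; simp only [sh]; ring

lemma Reach.kill (hW : IsWeakModule A.toVertexAlgebra Yw) {d : ℤ} {y : W}
    (hy : Reach A Yw d y) {nu : ℤ} {u : V} (hu : u ∈ A.gr nu) {m : ℤ}
    (h : nu - m - 1 + d < 0) : Yw u m y = 0 := by
  obtain ⟨L, t, hhom, hsh, ht, rfl⟩ := hy
  have : Yw u m (appL Yw L t) = appL Yw ((nu, u, m) :: L) t := by simp [appL]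
  rw [this]
  refine negkill A Yw hW _ _ rfl ?_ ?_ t ht
  · intro e he
    rcases List.mem_cons.1 he with rfl|h'
    · exact hu
    · exact hhom _ h'
  · rw [shL_cons, hsh]; simp only [sh]; omega

lemma Reach.zero (hW : IsWeakModule A.toVertexAlgebra Yw) {d : ℤ} {y : W}
    (hy : Reach A Yw d y) (hd : d < 0) : y = 0 := by
  obtain ⟨L, t, hhom, hsh, ht, rfl⟩ := hy
  exact negkill A Yw hW _ _ rfl hhom (by omega) t ht

end ModuleAux


section ModuleAux2

variable {V : Type*} [AddCommGroup V] [Module ℂ V] {W : Type*} [AddCommGroup W] [Module ℂ W]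
variable (A : GradedVA V) (Yw : V → ℤ → W →ₗ[ℂ] W)

/-- Weak associativity consequence of the Borcherds identity, in finite-sum form. -/
lemma assoc1 (hW : IsWeakModule A.toVertexAlgebra Yw) (u v : V) (y : W) (l N : ℕ) (q' r : ℤ)
    (htru : ∀ n : ℤ, (l:ℤ) ≤ n → Yw u n y = 0)
    (hNv : ∀ k : ℕ, N ≤ k → Yw v (q' + (k:ℤ)) y = 0) :
    ∑ j ∈ Finset.range (l+1),
        gb (l:ℤ) j • Yw (A.toVertexAlgebra.coeff u (r + j) v) ((l:ℤ) + q' - j) y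
      = ∑ k ∈ Finset.range N, ((-1:ℂ)^k * gb r k) • Yw u ((l:ℤ) + r - k) (Yw v (q' + k) y) := by
  obtain ⟨hadd, hsmul, htr, hv1, hvn, hbor⟩ := hW
  have H := hbor u v y (l:ℤ) q' r
  have hstep : ∀ k : ℕ, ((-1:ℂ)^k * gb r k) •
      (Yw u ((l:ℤ) + r - k) (Yw v (q' + k) y)
        - ((-1:ℂ)^r) • Yw v (q' + r - k) (Yw u ((l:ℤ) + k) y))
      = ((-1:ℂ)^k * gb r k) • Yw u ((l:ℤ) + r - k) (Yw v (q' + k) y) := by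
    intro k
    have h0 : Yw u ((l:ℤ) + k) y = 0 :=
      htru _ (le_add_of_nonneg_right (Int.natCast_nonneg k))
    rw [h0, map_zero, smul_zero, sub_zero]
  rw [finsum_congr hstep] at H
  have hL : (∑ᶠ j : ℕ, gb (l:ℤ) j • Yw (A.toVertexAlgebra.coeff u (r + j) v) ((l:ℤ) + q' - j) y)
      = ∑ j ∈ Finset.range (l+1),
          gb (l:ℤ) j • Yw (A.toVertexAlgebra.coeff u (r + j) v) ((l:ℤ) + q' - j) y := by
    apply finsum_eq_sum_of_support_subset
    intro j hj
    simp only [Finset.coe_range, Set.mem_Iio]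
    by_contra hmem
    have hlj : l < j := by omega
    exact hj (by simp only [gb_nat_lt' hlj, zero_smul])
  have hR : (∑ᶠ k : ℕ, ((-1:ℂ)^k * gb r k) • Yw u ((l:ℤ) + r - k) (Yw v (q' + k) y))
      = ∑ k ∈ Finset.range N, ((-1:ℂ)^k * gb r k) • Yw u ((l:ℤ) + r - k) (Yw v (q' + k) y) := by
    apply finsum_eq_sum_of_support_subset
    intro k hk
    simp only [Finset.coe_range, Set.mem_Iio]
    by_contra hmem
    have hNk : N ≤ k := by omega
    exact hk (by simp only [hNv k hNk, map_zero, smul_zero])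
  rw [hL, hR] at H
  exact H

/-- The iterate formula, derived from the Borcherds identity and truncation. -/
lemma iterate_formula (hA : A.IsNNGraded) (hW : IsWeakModule A.toVertexAlgebra Yw)
    (nu nv d p q : ℤ) (u v : V) (y : W)
    (hu : u ∈ A.gr nu) (hv : v ∈ A.gr nv) (hy : Reach A Yw d y) (hq : q < nv + d) :
    Yw u p (Yw v q y)
      = ∑ i ∈ Finset.range (nv + d - q).toNat, ∑ j ∈ Finset.range ((nu + d).toNat + 1),
          (gb (p - nu - d) i * gb (nu + d) j) •
            Yw (A.toVertexAlgebra.coeff u (p - nu - d - i + j) v) (q + nu + d + i - j) y := by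
  have hsmul := hW.2.1
  by_cases hd : d < 0
  · have hy0 : y = 0 := hy.zero hW hd
    subst hy0
    simp
  push_neg at hd
  by_cases hnu : nu < 0
  · have hu0 : u = 0 := by
      have hbot := hA nu hnu
      rw [hbot] at hu
      simpa using hu
    subst hu0
    simp [Yw_zero' Yw hsmul, coeff_zero']
  push_neg at hnu
  by_cases hnv : nv < 0
  · have hv0 : v = 0 := by
      have hbot := hA nv hnv
      rw [hbot] at hv
      simpa using hv
    subst hv0
    simp [Yw_zero' Yw hsmul]
  push_neg at hnv
  set l : ℕ := (nu + d).toNat with hldef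
  set K : ℕ := (nv + d - q).toNat with hKdef
  have hl : (l:ℤ) = nu + d := Int.toNat_of_nonneg (by omega)
  have hKz : (K:ℤ) = nv + d - q := Int.toNat_of_nonneg (by omega)
  have hK0 : 0 < K := by omega
  have htru : ∀ n : ℤ, (l:ℤ) ≤ n → Yw u n y = 0 := fun n hn => hy.kill hW hu (by omega)
  have hvv : ∀ m' : ℤ, nv + d ≤ m' → Yw v m' y = 0 := fun m' hm => hy.kill hW hv (by omega)
  have hE : ∀ i : ℕ,
      ∑ j ∈ Finset.range (l+1), gb (l:ℤ) j •
          Yw (A.toVertexAlgebra.coeff u ((p - (l:ℤ) - i) + j) v) ((l:ℤ) + (q + i) - j) y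
        = ∑ k ∈ Finset.range K, ((-1:ℂ)^k * gb (p - (l:ℤ) - i) k) •
            Yw u ((l:ℤ) + (p - (l:ℤ) - i) - k) (Yw v ((q + i) + k) y) := by
    intro i
    refine assoc1 A Yw ⟨hW.1, hW.2⟩ u v y l K (q + i) (p - (l:ℤ) - i) htru ?_
    intro k hk
    have hk' : ((K:ℕ):ℤ) ≤ (k:ℤ) := by exact_mod_cast hk
    have hi0 : (0:ℤ) ≤ (i:ℤ) := Int.natCast_nonneg i
    exact hvv _ (by omega)
  set G : ℕ → W := fun s => Yw u (p - s) (Yw v (q + s) y) with hGdef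
  have hGz : ∀ s, K ≤ s → G s = 0 := by
    intro s hs
    have hs' : ((K:ℕ):ℤ) ≤ (s:ℤ) := by exact_mod_cast hs
    have h0 : Yw v (q + s) y = 0 := hvv _ (by omega)
    simp only [hGdef, h0, map_zero]
  have hvan := vander' (p - (l:ℤ)) K hK0 G hGz
  calc Yw u p (Yw v q y) = G 0 := by simp [hGdef]
    _ = ∑ i ∈ Finset.range K, ∑ k ∈ Finset.range K,
          (gb (p - (l:ℤ)) i * ((-1:ℂ)^k * gb ((p - (l:ℤ)) - i) k)) • G (i+k) := hvan.symm
    _ = ∑ i ∈ Finset.range K, gb (p - (l:ℤ)) i •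
          (∑ k ∈ Finset.range K, ((-1:ℂ)^k * gb (p - (l:ℤ) - i) k) •
            Yw u ((l:ℤ) + (p - (l:ℤ) - i) - k) (Yw v ((q + i) + k) y)) := by
        refine Finset.sum_congr rfl fun i _ => ?_
        rw [Finset.smul_sum]
        refine Finset.sum_congr rfl fun k _ => ?_
        rw [smul_smul]
        have e1 : (l:ℤ) + (p - (l:ℤ) - i) - k = p - ((i:ℕ) + (k:ℕ) : ℕ) := by push_cast; ring
        have e2 : (q + i) + (k:ℤ) = q + ((i:ℕ) + (k:ℕ) : ℕ) := by push_cast; ring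
        rw [e1, e2]
    _ = ∑ i ∈ Finset.range K, gb (p - (l:ℤ)) i •
          (∑ j ∈ Finset.range (l+1), gb (l:ℤ) j •
            Yw (A.toVertexAlgebra.coeff u ((p - (l:ℤ) - i) + j) v) ((l:ℤ) + (q + i) - j) y) := by
        refine Finset.sum_congr rfl fun i _ => ?_
        rw [hE i]
    _ = ∑ i ∈ Finset.range K, ∑ j ∈ Finset.range (l + 1),
          (gb (p - nu - d) i * gb (nu + d) j) •
            Yw (A.toVertexAlgebra.coeff u (p - nu - d - i + j) v) (q + nu + d + i - j) y := by
        refine Finset.sum_congr rfl fun i _ => ?_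
        rw [Finset.smul_sum]
        refine Finset.sum_congr rfl fun j _ => ?_
        rw [smul_smul]
        have e1 : gb (p - (l:ℤ)) i = gb (p - nu - d) i := by rw [hl, sub_add_eq_sub_sub]
        have e2 : gb (l:ℤ) j = gb (nu + d) j := by rw [hl]
        have e3 : (p - (l:ℤ) - i) + j = p - nu - d - i + j := by omega
        have e4 : (l:ℤ) + (q + i) - j = q + nu + d + i - j := by omega
        rw [e1, e2, e3, e4]

/-- Vanishing of the `genJ` residue sums. -/
lemma genJ_vanish (hW : IsWeakModule A.toVertexAlgebra Yw)
    (wu wv : ℕ) (d K m : ℤ) (u v : V) (y : W)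
    (hu : u ∈ A.gr (wu:ℤ)) (hv : v ∈ A.gr (wv:ℤ)) (hy : Reach A Yw d y)
    (hm : m ≤ K - 2*d - 2) :
    ∑ j ∈ Finset.range (((wu:ℤ) + d).toNat + 1),
        gb ((wu:ℤ) + d) j •
          Yw (A.toVertexAlgebra.coeff u ((j:ℤ) + m) v) (K + (wu:ℤ) + (wv:ℤ) - j - m - 2) y
      = 0 := by
  by_cases hd : d < 0
  · have hy0 : y = 0 := hy.zero hW hd
    subst hy0
    simp
  push_neg at hd
  set l : ℕ := ((wu:ℤ) + d).toNat with hldef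
  have hwu0 : (0:ℤ) ≤ (wu:ℤ) := Int.natCast_nonneg wu
  have hl : (l:ℤ) = (wu:ℤ) + d := Int.toNat_of_nonneg (by omega)
  have htru : ∀ n : ℤ, (l:ℤ) ≤ n → Yw u n y = 0 := fun n hn => hy.kill hW hu (by omega)
  have h := assoc1 A Yw hW u v y l 0 (K + (wv:ℤ) - m - d - 2) m htru (by
    intro k _
    have hk0 : (0:ℤ) ≤ (k:ℤ) := Int.natCast_nonneg k
    exact hy.kill hW hv (by omega))
  rw [Finset.range_zero, Finset.sum_empty] at h
  rw [← h]
  refine Finset.sum_congr rfl fun j _ => ?_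
  have e1 : gb ((wu:ℤ) + d) j = gb (l:ℤ) j := by rw [hl]
  have e2 : (j:ℤ) + m = m + (j:ℤ) := by ring
  have e3 : K + (wu:ℤ) + (wv:ℤ) - j - m - 2 = (l:ℤ) + (K + (wv:ℤ) - m - d - 2) - j := by omega
  rw [e1, e2, e3]

end ModuleAux2


section G0

variable {V : Type*} [AddCommGroup V] [Module ℂ V] {W : Type*} [AddCommGroup W] [Module ℂ W]
  {M : Type*} [AddCommGroup M] [Module ℂ M]

lemma mulLeft_add' {A : Type*} [NonUnitalNonAssocSemiring A] [Module ℂ A]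
    [SMulCommClass ℂ A A] (x y : A) :
    LinearMap.mulLeft ℂ (x + y) = LinearMap.mulLeft ℂ x + LinearMap.mulLeft ℂ y :=
  LinearMap.ext fun b => add_mul x y b

lemma mulLeft_smul' {A : Type*} [NonUnitalNonAssocSemiring A] [Module ℂ A]
    [SMulCommClass ℂ A A] [IsScalarTower ℂ A A] (c : ℂ) (x : A) :
    LinearMap.mulLeft ℂ (c • x) = c • LinearMap.mulLeft ℂ x :=
  LinearMap.ext fun b => smul_mul_assoc c x b

variable (Yw : V → ℤ → W →ₗ[ℂ] W)
  (hadd : ∀ (u v : V) (n : ℤ), Yw (u + v) n = Yw u n + Yw v n)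
  (hsmul : ∀ (c : ℂ) (u : V) (n : ℤ), Yw (c • u) n = c • Yw u n)

/-- The bilinear action map `V ⊗ ℂ[t,t⁻¹] → End W` sending `u ⊗ t^m` to `Yw u m`. -/
noncomputable def bmap :
    (V ⊗[ℂ] AddMonoidAlgebra ℂ ℤ) →ₗ[ℂ] Module.End ℂ W :=
  (TensorProduct.lift
    { toFun := fun u =>
        Finsupp.lsum ℂ (fun m => LinearMap.toSpanSingleton ℂ (W →ₗ[ℂ] W) (Yw u m))
      map_add' := by
        intro u v
        refine Finsupp.lhom_ext fun m c => ?_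
        rw [Finsupp.lsum_single, LinearMap.add_apply, Finsupp.lsum_single,
          Finsupp.lsum_single, LinearMap.toSpanSingleton_apply,
          LinearMap.toSpanSingleton_apply, LinearMap.toSpanSingleton_apply, hadd,
          smul_add]
      map_smul' := by
        intro c u
        refine Finsupp.lhom_ext fun m c' => ?_
        rw [RingHom.id_apply, Finsupp.lsum_single, LinearMap.smul_apply,
          Finsupp.lsum_single, LinearMap.toSpanSingleton_apply,
          LinearMap.toSpanSingleton_apply, hsmul]
        exact smul_comm c' c _ }).comp (LinearMap.lTensor V
      ((AddMonoidAlgebra.coeffLinearEquiv ℂ : AddMonoidAlgebra ℂ ℤ ≃ₗ[ℂ] (ℤ →₀ ℂ)) :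
        AddMonoidAlgebra ℂ ℤ →ₗ[ℂ] (ℤ →₀ ℂ)))

lemma bmap_single (u : V) (m : ℤ) :
    bmap Yw hadd hsmul (u ⊗ₜ (AddMonoidAlgebra.ofCoeff (Finsupp.single m (1:ℂ)) : AddMonoidAlgebra ℂ ℤ)) = Yw u m := by
  rw [bmap, LinearMap.comp_apply, LinearMap.lTensor_tmul, TensorProduct.lift.tmul]
  show Finsupp.lsum ℂ (fun m => LinearMap.toSpanSingleton ℂ (W →ₗ[ℂ] W) (Yw u m))
      (Finsupp.single m (1:ℂ)) = Yw u m
  rw [Finsupp.lsum_single, LinearMap.toSpanSingleton_apply, one_smul]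

/-- The algebra morphism `T(V[t,t⁻¹]) → End W` extending `bmap`. -/
noncomputable def phi0 :
    TVt V →ₐ[ℂ] Module.End ℂ W :=
  TensorAlgebra.lift ℂ (bmap Yw hadd hsmul)

/-- The evaluation map `T(V[t,t⁻¹]) ⊗ M → W`, `t ⊗ w ↦ phi0(t) (f w)`. -/
noncomputable def g0 (f : M →ₗ[ℂ] W) :
    TAM V M →ₗ[ℂ] W :=
  TensorProduct.lift
    { toFun := fun t => (phi0 Yw hadd hsmul t).comp f
      map_add' := by
        intro t s
        simp only [map_add, LinearMap.add_comp]
      map_smul' := by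
        intro c t
        simp only [map_smul, RingHom.id_apply, LinearMap.smul_comp] }

lemma g0_tmul (f : M →ₗ[ℂ] W) (t : TVt V) (w : M) :
    g0 Yw hadd hsmul f (t ⊗ₜ w) = phi0 Yw hadd hsmul t (f w) := rfl

lemma g0_iM (f : M →ₗ[ℂ] W) (w : M) :
    g0 Yw hadd hsmul f (ιM M w) = f w := by
  have : ιM (V := V) M w = (1 : TVt V) ⊗ₜ w := rfl
  rw [this, g0_tmul, map_one, Module.End.one_apply]

lemma g0_act (f : M →ₗ[ℂ] W) (u : V) (m : ℤ) (z : TAM V M) :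
    g0 Yw hadd hsmul f (act M u m z) = Yw u m (g0 Yw hadd hsmul f z) := by
  have hcomp : (g0 Yw hadd hsmul f).comp (act M u m)
      = (Yw u m).comp (g0 Yw hadd hsmul f) := by
    apply TensorProduct.ext'
    intro t w
    simp only [LinearMap.comp_apply]
    have hact : act M u m (t ⊗ₜ[ℂ] w)
        = (TensorAlgebra.ι ℂ (u ⊗ₜ (AddMonoidAlgebra.ofCoeff (Finsupp.single m (1:ℂ)) : AddMonoidAlgebra ℂ ℤ)) * t)
            ⊗ₜ[ℂ] w :=
      LinearMap.rTensor_tmul _ _ _ _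
    have hphi : phi0 Yw hadd hsmul
        (TensorAlgebra.ι ℂ (u ⊗ₜ (AddMonoidAlgebra.ofCoeff (Finsupp.single m (1:ℂ)) : AddMonoidAlgebra ℂ ℤ)))
        = Yw u m :=
      (TensorAlgebra.lift_ι_apply _ _).trans (bmap_single Yw hadd hsmul u m)
    rw [hact, g0_tmul, g0_tmul, map_mul, Module.End.mul_apply]
    exact DFunLike.congr_fun hphi _
  exact LinearMap.congr_fun hcomp z

/-- The module `T(V[t,t⁻¹]) ⊗ M` is generated from `ιM M` by the operators `act`. -/
lemma TAM_gen (N : Submodule ℂ (TAM V M)) (h1 : ∀ w : M, ιM M w ∈ N)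
    (h2 : ∀ (u : V) (m : ℤ), ∀ z ∈ N, act M u m z ∈ N) : ∀ z, z ∈ N := by
  have hgen : ∀ (a : V ⊗[ℂ] AddMonoidAlgebra ℂ ℤ), ∀ z ∈ N,
      LinearMap.rTensor M (LinearMap.mulLeft ℂ (TensorAlgebra.ι ℂ a)) z ∈ N := by
    intro a
    induction a using TensorProduct.induction_on with
    | zero =>
      intro z hz
      rw [map_zero, LinearMap.mulLeft_zero_eq_zero, LinearMap.rTensor_zero,
        LinearMap.zero_apply]
      exact N.zero_mem
    | tmul u pp =>
      induction pp using AddMonoidAlgebra.induction_on with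
      | of g =>
        intro z hz
        have : AddMonoidAlgebra.of ℂ ℤ (Multiplicative.ofAdd g)
            = (AddMonoidAlgebra.ofCoeff (Finsupp.single g (1:ℂ)) : AddMonoidAlgebra ℂ ℤ) := rfl
        rw [this]
        exact h2 u g z hz
      | add p1 p2 ih1 ih2 =>
        intro z hz
        rw [TensorProduct.tmul_add, map_add, mulLeft_add', LinearMap.rTensor_add,
          LinearMap.add_apply]
        exact N.add_mem (ih1 z hz) (ih2 z hz)
      | smul c p ih =>
        intro z hz
        rw [TensorProduct.tmul_smul, map_smul, mulLeft_smul', LinearMap.rTensor_smul,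
          LinearMap.smul_apply]
        exact N.smul_mem c (ih z hz)
    | add a b iha ihb =>
      intro z hz
      rw [map_add, mulLeft_add', LinearMap.rTensor_add, LinearMap.add_apply]
      exact N.add_mem (iha z hz) (ihb z hz)
  have hmul : ∀ t : TVt V, ∀ z ∈ N, LinearMap.rTensor M (LinearMap.mulLeft ℂ t) z ∈ N := by
    intro t
    induction t using TensorAlgebra.induction with
    | algebraMap c =>
      intro z hz
      have : LinearMap.mulLeft ℂ (algebraMap ℂ (TVt V) c) = c • LinearMap.id :=
        LinearMap.ext fun b => by
          simp [LinearMap.mulLeft_apply, Algebra.smul_def]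
      rw [this, LinearMap.rTensor_smul, LinearMap.rTensor_id, LinearMap.smul_apply,
        LinearMap.id_apply]
      exact N.smul_mem c hz
    | ι a => exact hgen a
    | mul t s iht ihs =>
      intro z hz
      rw [LinearMap.mulLeft_mul, LinearMap.rTensor_comp, LinearMap.comp_apply]
      exact iht _ (ihs z hz)
    | add t s iht ihs =>
      intro z hz
      rw [mulLeft_add', LinearMap.rTensor_add, LinearMap.add_apply]
      exact N.add_mem (iht z hz) (ihs z hz)
  intro z
  induction z using TensorProduct.induction_on with
  | zero => exact N.zero_mem
  | tmul t w =>
    have : (t ⊗ₜ[ℂ] w : TAM V M)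
        = LinearMap.rTensor M (LinearMap.mulLeft ℂ t) (ιM M w) := by
      have h0 : ιM (V := V) M w = (1 : TVt V) ⊗ₜ w := rfl
      rw [h0, LinearMap.rTensor_tmul, LinearMap.mulLeft_apply, mul_one]
    rw [this]
    exact hmul t _ (h1 w)
  | add x y ihx ihy => exact N.add_mem ihx ihy

end G0


lemma act1_mk {V : Type*} [AddCommGroup V] [Module ℂ V] (A : GradedVA V)
    (M : Type*) [AddCommGroup M] [Module ℂ M] (ρ : AVModule A M) (u : V) (m : ℤ)
    (z : TAM V M) :
    act1 A M ρ u m ((idealI A M ρ).mkQ z) = (idealI A M ρ).mkQ (act M u m z) := by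
  simp [act1, Submodule.mapQ_apply]
  rfl

lemma act2_mk {V : Type*} [AddCommGroup V] [Module ℂ V] (A : GradedVA V)
    (M : Type*) [AddCommGroup M] [Module ℂ M] (ρ : AVModule A M) (u : V) (m : ℤ)
    (ξ : S1 A M ρ) :
    act2 A M ρ u m ((idealJ A M ρ).mkQ ξ) = (idealJ A M ρ).mkQ (act1 A M ρ u m ξ) := by
  simp [act2, Submodule.mapQ_apply]
  rfl


/-- Theorem 5.5, universal property of `S`: for an `A(V)`-module `M`,
any ℕ-gradable weak `V`-module `W`, and any `A(V)`-module map `f : M → T(W)` into the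
top level, there exists a unique `V`-module map `f̃ : S(M) → W` whose restriction to
the top level `T(S(M))` equals `f ∘ e_M⁻¹`, i.e. with `f̃ ∘ e_M = f`. -/
theorem statement12 {V : Type*} [AddCommGroup V] [Module ℂ V] (A : GradedVA V)
    (hA : A.IsNNGraded) (M : Type*) [AddCommGroup M] [Module ℂ M]
    (ρ : AVModule A M)
    (W : Type*) [AddCommGroup W] [Module ℂ W]
    (Yw : V → ℤ → W →ₗ[ℂ] W) (wgr : ℤ → Submodule ℂ W)
    (hW : IsWeakModule A.toVertexAlgebra Yw) (hWgr : IsNNGradedModule A Yw wgr)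
    (f : M →ₗ[ℂ] W)
    (hf_top : ∀ w : M, f w ∈ topLevel A Yw)
    (hf_mod : ∀ (n : ℤ) (u : V), u ∈ A.gr n → ∀ w : M,
      f (ρ.ρ u w) = Yw u (n - 1) (f w)) :
    ∃! g : SM A M ρ →ₗ[ℂ] W,
      (∀ (u : V) (m : ℤ) (x : SM A M ρ), g (act2 A M ρ u m x) = Yw u m (g x)) ∧
      ∀ w : M, g (eM A M ρ w) = f w := by
  have hadd := hW.1
  have hsmul := hW.2.1
  set F : TAM V M →ₗ[ℂ] W := g0 Yw hadd hsmul f with hFdef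
  have hFact : ∀ (u : V) (m : ℤ) (z : TAM V M), F (act M u m z) = Yw u m (F z) :=
    g0_act Yw hadd hsmul f
  have hFiM : ∀ w : M, F (ιM M w) = f w := g0_iM Yw hadd hsmul f
  have hreach : ∀ (d : ℤ) (x : TAM V M), Hdeg A M d x → Reach A Yw d (F x) := by
    intro d x hx
    induction hx with
    | base w =>
      rw [hFiM]
      exact Reach.base (hf_top w)
    | step n m u hu hx ih =>
      rw [hFact]
      exact ih.step hu m
  have hIker : idealI A M ρ ≤ LinearMap.ker F := by
    refine sInf_le ⟨?_, ?_⟩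
    · intro z hz
      simp only [SetLike.mem_coe, LinearMap.mem_ker]
      rcases hz with (hz | hz) | hz
      · obtain ⟨n, m, d, u, x, hu, hx, hneg, rfl⟩ := hz
        rw [hFact]
        exact (hreach d x hx).kill hW hu (by omega)
      · obtain ⟨n, u, w, hu, rfl⟩ := hz
        rw [map_sub, hFact, hFiM, hFiM, hf_mod n u hu w, sub_self]
      · obtain ⟨nu, nv, d, p, q, u, v, x, hu, hv, hx, hq, hge, rfl⟩ := hz
        rw [map_sub]
        simp only [map_sum, map_smul, hFact]
        rw [← iterate_formula A Yw hA hW nu nv d p q u v (F x) hu hv (hreach d x hx) hq]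
        exact sub_self _
    · intro u m z hz
      rw [LinearMap.mem_ker] at hz ⊢
      rw [hFact, hz, map_zero]
  set G1 : S1 A M ρ →ₗ[ℂ] W := (idealI A M ρ).liftQ F hIker with hG1def
  have hG1mk : ∀ z : TAM V M, G1 ((idealI A M ρ).mkQ z) = F z := fun z =>
    LinearMap.congr_fun (Submodule.liftQ_mkQ (idealI A M ρ) F hIker) z
  have hG1act : ∀ (u : V) (m : ℤ) (ξ : S1 A M ρ), G1 (act1 A M ρ u m ξ) = Yw u m (G1 ξ) := by
    intro u m ξ
    obtain ⟨z, rfl⟩ := (idealI A M ρ).mkQ_surjective ξ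
    rw [act1_mk, hG1mk, hG1mk, hFact]
  have hJker : idealJ A M ρ ≤ LinearMap.ker G1 := by
    refine sInf_le ⟨?_, ?_⟩
    · intro ξ hξ
      obtain ⟨wu, wv, d, K, m, u, v, x, hu, hv, hx, hm, rfl⟩ := hξ
      simp only [SetLike.mem_coe, LinearMap.mem_ker]
      rw [hG1mk]
      simp only [map_sum, map_smul, hFact]
      exact genJ_vanish A Yw hW wu wv d K m u v (F x) hu hv (hreach d x hx) hm
    · intro u m ξ hξ
      rw [LinearMap.mem_ker] at hξ ⊢
      rw [hG1act, hξ, map_zero]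
  set gdef : SM A M ρ →ₗ[ℂ] W := (idealJ A M ρ).liftQ G1 hJker with hgdef
  have hGmk : ∀ ξ : S1 A M ρ, gdef ((idealJ A M ρ).mkQ ξ) = G1 ξ := fun ξ =>
    LinearMap.congr_fun (Submodule.liftQ_mkQ (idealJ A M ρ) G1 hJker) ξ
  have hprop1 : ∀ (u : V) (m : ℤ) (ξ : SM A M ρ), gdef (act2 A M ρ u m ξ) = Yw u m (gdef ξ) := by
    intro u m ξ
    obtain ⟨ξ1, rfl⟩ := (idealJ A M ρ).mkQ_surjective ξ
    rw [act2_mk, hGmk, hGmk, hG1act]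
  have hprop2 : ∀ w : M, gdef (eM A M ρ w) = f w := by
    intro w
    have he : eM A M ρ w = (idealJ A M ρ).mkQ ((idealI A M ρ).mkQ (ιM M w)) := rfl
    rw [he, hGmk, hG1mk, hFiM]
  refine ⟨gdef, ⟨hprop1, hprop2⟩, ?_⟩
  intro g' hg'
  obtain ⟨hg'act, hg'eM⟩ := hg'
  set π : TAM V M →ₗ[ℂ] SM A M ρ :=
    (idealJ A M ρ).mkQ.comp (idealI A M ρ).mkQ with hπdef
  have hmem : ∀ z : TAM V M, z ∈ LinearMap.ker ((g' - gdef).comp π) := by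
    apply TAM_gen
    · intro w
      rw [LinearMap.mem_ker, LinearMap.comp_apply, LinearMap.sub_apply]
      have he : π (ιM M w) = eM A M ρ w := rfl
      rw [he, hg'eM, hprop2, sub_self]
    · intro u m z hz
      rw [LinearMap.mem_ker, LinearMap.comp_apply, LinearMap.sub_apply] at hz ⊢
      have hπ : π (act M u m z) = act2 A M ρ u m (π z) := by
        show (idealJ A M ρ).mkQ ((idealI A M ρ).mkQ (act M u m z))
            = act2 A M ρ u m ((idealJ A M ρ).mkQ ((idealI A M ρ).mkQ z))
        rw [act2_mk, act1_mk]
      rw [hπ, hg'act, hprop1, sub_eq_zero] at *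
      rw [hz]
  apply LinearMap.ext
  intro ξ
  obtain ⟨ξ1, rfl⟩ := (idealJ A M ρ).mkQ_surjective ξ
  obtain ⟨z, rfl⟩ := (idealI A M ρ).mkQ_surjective ξ1
  have := hmem z
  rw [LinearMap.mem_ker, LinearMap.comp_apply, LinearMap.sub_apply, sub_eq_zero] at this
  exact this
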